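/- Let A be a finite-dimensional algebra over a field and f an idempotent of A such that projdim_A(A/⟨f⟩) ≤ 1 and the algebra A/⟨f⟩ has finite global dimension. Then every finitely generated A/⟨f⟩-module, viewed as an A-module, has finite projective dimension over A. -/

import Mathlib

open CategoryTheory

noncomputable section

/-- Vanishing of the `n`-th Ext group of two `A`-modules. -/
def ExtVanish (A : Type) [Ring A] (n : ℕ) (X Y : ModuleCat.{0} A) : Prop :=
  Limits.IsZero (((Ext ℤ (ModuleCat.{0} A) n).obj (Opposite.op X)).obj Y)

/-- `M` belongs to `add X`: it is a direct summand of a finite direct sum of copies of `X`. -/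
def InAdd (A : Type) [Ring A] (X M : ModuleCat.{0} A) : Prop :=
  ∃ (n : ℕ) (i : M →ₗ[A] (Fin n → X)) (p : (Fin n → X) →ₗ[A] M),
    p.comp i = LinearMap.id

/-- `N` is a (first) syzygy of `M`: there is an exact sequence `0 → N → P → M → 0`
with `P` projective. -/
def IsSyzygyOf (A : Type) [Ring A] (N M : ModuleCat.{0} A) : Prop :=
  ∃ (P : ModuleCat.{0} A), Module.Projective A P ∧
    ∃ (ι : N →ₗ[A] P) (π : P →ₗ[A] M),
      Function.Injective ι ∧ Function.Surjective π ∧ Function.Exact ι π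

/-- `N` is an `n`-th syzygy of `M`. -/
def IsNthSyzygyOf (A : Type) [Ring A] : ℕ → ModuleCat.{0} A → ModuleCat.{0} A → Prop
  | 0, N, M => Nonempty (N ≅ M)
  | n + 1, N, M => ∃ K : ModuleCat.{0} A, IsSyzygyOf A K M ∧ IsNthSyzygyOf A n N K

/-- `N` is a (first) cosyzygy of `M`: there is an exact sequence `0 → M → I → N → 0`
with `I` injective. -/
def IsCosyzygyOf (A : Type) [Ring A] (N M : ModuleCat.{0} A) : Prop :=
  ∃ (I : ModuleCat.{0} A), Module.Injective A I ∧
    ∃ (ι : M →ₗ[A] I) (π : I →ₗ[A] N),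
      Function.Injective ι ∧ Function.Surjective π ∧ Function.Exact ι π

/-- `N` is an `n`-th cosyzygy of `M`. -/
def IsNthCosyzygyOf (A : Type) [Ring A] : ℕ → ModuleCat.{0} A → ModuleCat.{0} A → Prop
  | 0, N, M => Nonempty (N ≅ M)
  | n + 1, N, M => ∃ K : ModuleCat.{0} A, IsCosyzygyOf A K M ∧ IsNthCosyzygyOf A n N K

/-- The projective dimension of `M` is at most `n`. -/
def ProjDimLE (A : Type) [Ring A] (n : ℕ) (M : ModuleCat.{0} A) : Prop :=
  ∃ K : ModuleCat.{0} A, IsNthSyzygyOf A n K M ∧ Module.Projective A K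

/-- The injective dimension of `M` is at most `n`. -/
def InjDimLE (A : Type) [Ring A] (n : ℕ) (M : ModuleCat.{0} A) : Prop :=
  ∃ K : ModuleCat.{0} A, IsNthCosyzygyOf A n K M ∧ Module.Injective A K

/-- The underlying type of `D(A) = Hom_k(A, k)`. -/
def DualMod (k A : Type) [Field k] [Ring A] [Algebra k A] : Type := A →ₗ[k] k

instance (k A : Type) [Field k] [Ring A] [Algebra k A] : AddCommGroup (DualMod k A) :=
  inferInstanceAs (AddCommGroup (A →ₗ[k] k))

/-- Auxiliary scalar action for `DualMod`. -/
def dualSMul (k A : Type) [Field k] [Ring A] [Algebra k A] (a : A) (φ : A →ₗ[k] k) :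
    A →ₗ[k] k := φ.comp (LinearMap.mulRight k a)

/-- The left `A`-module structure on `D(A)`: `(a • φ) x = φ (x * a)`. -/
instance (k A : Type) [Field k] [Ring A] [Algebra k A] : Module A (DualMod k A) where
  smul a φ := dualSMul k A a φ
  one_smul φ := by
    show dualSMul k A 1 φ = φ
    unfold dualSMul; ext x; simp [LinearMap.mulRight]; rfl
  mul_smul a b φ := by
    show dualSMul k A (a * b) φ = dualSMul k A a (dualSMul k A b φ)
    unfold dualSMul; ext x; simp [LinearMap.mulRight, mul_assoc]
    exact congrArg (fun y => (show A →ₗ[k] k from φ) y) (mul_assoc x a b).symm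
  smul_zero a := by
    show dualSMul k A a 0 = 0
    unfold dualSMul; ext x; simp
  smul_add a φ ψ := by
    show dualSMul k A a (φ + ψ) = dualSMul k A a φ + dualSMul k A a ψ
    unfold dualSMul; ext x; rfl
  add_smul a b φ := by
    show dualSMul k A (a + b) φ = dualSMul k A a φ + dualSMul k A b φ
    unfold dualSMul; ext x; simp [LinearMap.mulRight, mul_add]
    exact map_add (show A →ₗ[k] k from φ) (x * a) (x * b)
  zero_smul φ := by
    show dualSMul k A 0 φ = 0
    unfold dualSMul; ext x; simp [LinearMap.mulRight]
    exact map_zero (show A →ₗ[k] k from φ)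

/-- `D(A)`, the dual of the right regular module, as an object of `ModuleCat A`. -/
def DualA (k A : Type) [Field k] [Ring A] [Algebra k A] : ModuleCat.{0} A :=
  ModuleCat.of A (DualMod k A)

/-- The idempotent ideal `⟨e⟩ = AeA`, as a left submodule of `A`. -/
def idemIdeal (A : Type) [Ring A] (e : A) : Submodule A A :=
  Submodule.span A (Set.range fun b : A => e * b)

/-- The quotient `A/⟨e⟩` as a left `A`-module. -/
def quotMod (A : Type) [Ring A] (e : A) : ModuleCat.{0} A :=
  ModuleCat.of A (A ⧸ idemIdeal A e)

/-- The left ideal `Ae = {x | x * e = x}` (for `e` idempotent), as a submodule of `A`. -/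
def leftPart (A : Type) [Ring A] (e : A) : Submodule A A where
  carrier := {x | x * e = x}
  add_mem' := by intro a b ha hb; simp only [Set.mem_setOf_eq] at *; rw [add_mul, ha, hb]
  zero_mem' := by simp
  smul_mem' := by intro c x hx; simp only [Set.mem_setOf_eq, smul_eq_mul] at *;
                  rw [mul_assoc, hx]

/-- `Ae` as an object of `ModuleCat A`. -/
def AeMod (A : Type) [Ring A] (e : A) : ModuleCat.{0} A :=
  ModuleCat.of A (leftPart A e)

/-- `M` is Gorenstein projective: `Ext^i_A(M, A) = 0` for all `i > 0`. -/
def IsGorensteinProjective (A : Type) [Ring A] (M : ModuleCat.{0} A) : Prop :=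
  ∀ i : ℕ, 0 < i → ExtVanish A i M (ModuleCat.of A A)

/-- `M` is Gorenstein injective: `Ext^i_A(D(A), M) = 0` for all `i > 0`. -/
def IsGorensteinInjective (k A : Type) [Field k] [Ring A] [Algebra k A]
    (M : ModuleCat.{0} A) : Prop :=
  ∀ i : ℕ, 0 < i → ExtVanish A i (DualA k A) M

/-- `M ∈ gen_l(Ae)`: `M` has a projective resolution whose terms in degrees `≤ l`
lie in `add (Ae)`. -/
def GenLE (A : Type) [Ring A] (e : A) (l : ℕ) (M : ModuleCat.{0} A) : Prop :=
  ∃ (P : ℕ → ModuleCat.{0} A) (d : ∀ n : ℕ, (P (n + 1) →ₗ[A] P n)) (π : P 0 →ₗ[A] M),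
    (∀ n, Module.Projective A (P n)) ∧
    Function.Surjective π ∧
    Function.Exact (d 0) π ∧
    (∀ n, Function.Exact (d (n + 1)) (d n)) ∧
    (∀ n ≤ l, InAdd A (AeMod A e) (P n))

section Helpers

variable {A : Type} [Ring A]

lemma projDimLE_succ_iff {n : ℕ} {M : ModuleCat.{0} A} :
    ProjDimLE A (n + 1) M ↔ ∃ K : ModuleCat.{0} A, IsSyzygyOf A K M ∧ ProjDimLE A n K := by
  constructor
  · rintro ⟨L, ⟨K, hK, hL⟩, hproj⟩
    exact ⟨K, hK, L, hL, hproj⟩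
  · rintro ⟨K, hK, L, hL, hproj⟩
    exact ⟨L, ⟨K, hK, hL⟩, hproj⟩

lemma isSyzygyOf_congr {K M M' : ModuleCat.{0} A} (e : ↥M ≃ₗ[A] ↥M')
    (h : IsSyzygyOf A K M) : IsSyzygyOf A K M' := by
  obtain ⟨P, hP, ι, π, hι, hπ, hex⟩ := h
  refine ⟨P, hP, ι, (e : ↥M →ₗ[A] ↥M').comp π, hι, e.surjective.comp hπ, fun y => ?_⟩
  rw [LinearMap.comp_apply, LinearEquiv.coe_coe, LinearEquiv.map_eq_zero_iff]
  exact hex y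

lemma isNthSyzygyOf_congr : ∀ {n : ℕ} {K M M' : ModuleCat.{0} A},
    (↥M ≃ₗ[A] ↥M') → IsNthSyzygyOf A n K M → IsNthSyzygyOf A n K M'
  | 0, K, M, M', e, ⟨i⟩ => ⟨i ≪≫ e.toModuleIso⟩
  | n + 1, K, M, M', e, ⟨L, hL, hK⟩ => ⟨L, isSyzygyOf_congr e hL, hK⟩

lemma projDimLE_congr {n : ℕ} {M M' : ModuleCat.{0} A} (e : ↥M ≃ₗ[A] ↥M')
    (h : ProjDimLE A n M) : ProjDimLE A n M' :=
  let ⟨K, hs, hp⟩ := h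
  ⟨K, isNthSyzygyOf_congr e hs, hp⟩

lemma projDimLE_zero_of_projective {M : ModuleCat.{0} A} (h : Module.Projective A M) :
    ProjDimLE A 0 M :=
  ⟨M, ⟨Iso.refl M⟩, h⟩

lemma projective_of_projDimLE_zero {M : ModuleCat.{0} A} (h : ProjDimLE A 0 M) :
    Module.Projective A M := by
  obtain ⟨K, ⟨i⟩, hK⟩ := h
  exact Module.Projective.of_equiv i.toLinearEquiv

set_option maxHeartbeats 1000000 in
lemma isSyzygyOf_ker {P M : ModuleCat.{0} A} (hP : Module.Projective A P)
    (π : ↥P →ₗ[A] ↥M) (hπ : Function.Surjective π) :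
    IsSyzygyOf A (ModuleCat.of A (LinearMap.ker π)) M := by
  refine ⟨P, hP, (LinearMap.ker π).subtype, π, Subtype.val_injective, hπ, fun y => ?_⟩
  constructor
  · intro hy
    exact ⟨⟨y, hy⟩, rfl⟩
  · rintro ⟨⟨x, hx⟩, rfl⟩
    exact hx

end Helpers

section Ext

variable {A : Type} [Ring A]

lemma projDimLE_of_extension : ∀ (m : ℕ) {L N K : ModuleCat.{0} A}
    (l : ↥L →ₗ[A] ↥N) (q : ↥N →ₗ[A] ↥K),
    Module.Projective A L → Function.Injective l → Function.Surjective q → Function.Exact l q →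
    ProjDimLE A m K → ProjDimLE A m N := by
  intro m
  match m with
  | 0 =>
    intro L N K l q hL hlinj hqsurj hex hK
    haveI := hL
    haveI : Module.Projective A K := projective_of_projDimLE_zero hK
    obtain ⟨s, hs⟩ := Module.projective_lifting_property q LinearMap.id hqsurj
    let e := (hex.splitSurjectiveEquiv hlinj ⟨s, hs⟩).1
    exact projDimLE_zero_of_projective (Module.Projective.of_equiv (M := ↥L × ↥K) e.symm)
  | (m+1) =>
    intro L N K l q hL hlinj hqsurj hex hK
    obtain ⟨K₁, ⟨P₁, hP₁, ι₁, π₁, hι₁, hπ₁, hex₁⟩, hK₁⟩ := projDimLE_succ_iff.mp hK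
    haveI := hL; haveI := hP₁
    set d : ↥P₁ × ↥N →ₗ[A] ↥K :=
      (π₁.comp (LinearMap.fst A ↥P₁ ↥N)) - (q.comp (LinearMap.snd A ↥P₁ ↥N)) with hd
    set X : Submodule A (↥P₁ × ↥N) := LinearMap.ker d with hX
    have hmem : ∀ x : ↥P₁ × ↥N, x ∈ X ↔ π₁ x.1 = q x.2 := fun x => by
      simp [hX, hd, LinearMap.mem_ker, sub_eq_zero]
    let pr₂ : ↥X →ₗ[A] ↥N := (LinearMap.snd A ↥P₁ ↥N).comp X.subtype
    let pr₁ : ↥X →ₗ[A] ↥P₁ := (LinearMap.fst A ↥P₁ ↥N).comp X.subtype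
    have hpr₂surj : Function.Surjective pr₂ := by
      intro nn
      obtain ⟨p, hp⟩ := hπ₁ (q nn)
      exact ⟨⟨(p, nn), (hmem _).2 hp⟩, rfl⟩
    have hj0 : ∀ x : ↥K₁, ((ι₁ x, 0) : ↥P₁ × ↥N) ∈ X := fun x => (hmem _).2 (by
      rw [map_zero]
      exact (hex₁ (ι₁ x)).mpr ⟨x, rfl⟩)
    let j : ↥K₁ →ₗ[A] ↥X := LinearMap.codRestrict X ((LinearMap.inl A ↥P₁ ↥N).comp ι₁) hj0
    have hjinj : Function.Injective j := by
      intro a b hab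
      apply hι₁
      have := congrArg (fun z : ↥X => (z : ↥P₁ × ↥N).1) hab
      exact this
    have hjex : Function.Exact j pr₂ := by
      intro x
      constructor
      · intro hx
        have h1 : (x : ↥P₁ × ↥N).2 = 0 := hx
        have h2 : π₁ (x : ↥P₁ × ↥N).1 = 0 := by
          rw [(hmem _).1 x.2, h1, map_zero]
        obtain ⟨k, hk⟩ := (hex₁ _).mp h2
        exact ⟨k, Subtype.ext (Prod.ext (by exact hk) (by exact h1.symm))⟩
      · rintro ⟨k, rfl⟩
        rfl
    have hl0 : ∀ x : ↥L, ((0, l x) : ↥P₁ × ↥N) ∈ X := fun x => (hmem _).2 (by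
      rw [map_zero]
      exact ((hex (l x)).mpr ⟨x, rfl⟩).symm)
    let l' : ↥L →ₗ[A] ↥X := LinearMap.codRestrict X ((LinearMap.inr A ↥P₁ ↥N).comp l) hl0
    have hl'inj : Function.Injective l' := by
      intro a b hab
      apply hlinj
      have := congrArg (fun z : ↥X => (z : ↥P₁ × ↥N).2) hab
      exact this
    have hl'ex : Function.Exact l' pr₁ := by
      intro x
      constructor
      · intro hx
        have h1 : (x : ↥P₁ × ↥N).1 = 0 := hx
        have h2 : q (x : ↥P₁ × ↥N).2 = 0 := by
          rw [← (hmem _).1 x.2, h1, map_zero]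
        obtain ⟨y, hy⟩ := (hex _).mp h2
        exact ⟨y, Subtype.ext (Prod.ext (by exact h1.symm) (by exact hy))⟩
      · rintro ⟨y, rfl⟩
        rfl
    obtain ⟨h, hh⟩ := Module.projective_lifting_property q π₁ hqsurj
    have hs0 : ∀ p : ↥P₁, ((p, h p) : ↥P₁ × ↥N) ∈ X := fun p => (hmem _).2 (by
      rw [← hh]; rfl)
    let s : ↥P₁ →ₗ[A] ↥X := LinearMap.codRestrict X (LinearMap.prod LinearMap.id h) hs0
    have hsec : pr₁ ∘ₗ s = LinearMap.id := by ext p; rfl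
    let e := (hl'ex.splitSurjectiveEquiv hl'inj ⟨s, hsec⟩).1
    haveI hXproj : Module.Projective A ↥X := Module.Projective.of_equiv (M := ↥L × ↥P₁) e.symm
    exact projDimLE_succ_iff.mpr
      ⟨K₁, ⟨ModuleCat.of A ↥X, hXproj, j, pr₂, hjinj, hpr₂surj, hjex⟩, hK₁⟩

end Ext

section Step

variable {A : Type} [Ring A]

lemma projDimLE_step (m : ℕ) {K Pm M : ModuleCat.{0} A}
    (κ : ↥K →ₗ[A] ↥Pm) (p : ↥Pm →ₗ[A] ↥M)
    (hκ : Function.Injective κ) (hp : Function.Surjective p) (hexk : Function.Exact κ p)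
    (hPm : ProjDimLE A 1 Pm) (hK : ProjDimLE A m K) :
    ProjDimLE A (m + 1) M := by
  obtain ⟨L₀, ⟨Q, hQ, ιL, qq, hιL, hqq, hexL⟩, hL₀pd⟩ := projDimLE_succ_iff.mp hPm
  haveI := hQ
  have hL₀ : Module.Projective A ↥L₀ := projective_of_projDimLE_zero hL₀pd
  set π : ↥Q →ₗ[A] ↥M := p.comp qq with hπdef
  have hπ : Function.Surjective π := hp.comp hqq
  set N : Submodule A ↥Q := LinearMap.ker π with hN
  have hlN0 : ∀ x : ↥L₀, ιL x ∈ N := fun x => by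
    have h1 : qq (ιL x) = 0 := (hexL (ιL x)).mpr ⟨x, rfl⟩
    simp [hN, LinearMap.mem_ker, hπdef, h1]
  let lN : ↥L₀ →ₗ[A] ↥N := LinearMap.codRestrict N ιL hlN0
  have hlNinj : Function.Injective lN := fun a b hab => hιL (congrArg Subtype.val hab)
  let eκ : ↥K ≃ₗ[A] LinearMap.range κ := LinearEquiv.ofInjective κ hκ
  have hqn : ∀ n : ↥N, qq (n : ↥Q) ∈ LinearMap.range κ := fun n => by
    rw [LinearMap.mem_range]
    have h1 : p (qq (n : ↥Q)) = 0 := n.2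
    obtain ⟨y, hy⟩ := (hexk _).mp h1
    exact ⟨y, hy⟩
  let gq : ↥N →ₗ[A] ↥K := (eκ.symm : LinearMap.range κ →ₗ[A] ↥K).comp
      (LinearMap.codRestrict (LinearMap.range κ) (qq.comp N.subtype) hqn)
  have hκsymm : ∀ z : LinearMap.range κ, κ (eκ.symm z) = (z : ↥Pm) := fun z => by
    conv_rhs => rw [← eκ.apply_symm_apply z]
    rw [LinearEquiv.ofInjective_apply]
  have hcomm : ∀ n : ↥N, κ (gq n) = qq (n : ↥Q) := fun n => by
    simp only [gq, LinearMap.comp_apply, LinearEquiv.coe_coe, hκsymm,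
      LinearMap.codRestrict_apply]
    rfl
  have hgqsurj : Function.Surjective gq := by
    intro kk
    obtain ⟨y, hy⟩ := hqq (κ kk)
    have hyN : y ∈ N := by
      have : p (qq y) = 0 := by
        rw [hy]
        exact (hexk _).mpr ⟨kk, rfl⟩
      simpa [hN, LinearMap.mem_ker, hπdef] using this
    refine ⟨⟨y, hyN⟩, hκ ?_⟩
    rw [hcomm]
    exact hy
  have hexN : Function.Exact lN gq := by
    intro n
    constructor
    · intro h0
      have h1 : qq (n : ↥Q) = 0 := by rw [← hcomm n, h0, map_zero]
      obtain ⟨x, hx⟩ := (hexL _).mp h1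
      exact ⟨x, Subtype.ext hx⟩
    · rintro ⟨x, rfl⟩
      apply hκ
      rw [hcomm, map_zero]
      exact (hexL (ιL x)).mpr ⟨x, rfl⟩
  have hNpd : ProjDimLE A m (ModuleCat.of A ↥N) :=
    projDimLE_of_extension m lN gq hL₀ hlNinj hgqsurj hexN hK
  exact projDimLE_succ_iff.mpr ⟨ModuleCat.of A ↥N, isSyzygyOf_ker hQ π hπ, hNpd⟩

end Step

section Finsupp

variable {A : Type} [Ring A]

lemma projective_finsupp (α : Type) (P : Type) [AddCommGroup P] [Module A P]
    [Module.Projective A P] : Module.Projective A (α →₀ P) := by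
  classical
  exact Module.Projective.of_equiv (finsuppLequivDFinsupp (ι := α) (M := P) A).symm

lemma exact_mapRange {α : Type} {K P N : Type} [AddCommGroup K] [AddCommGroup P]
    [AddCommGroup N] [Module A K] [Module A P] [Module A N]
    (ι : K →ₗ[A] P) (π : P →ₗ[A] N) (hinj : Function.Injective ι)
    (hex : Function.Exact ι π) :
    Function.Exact (Finsupp.mapRange.linearMap (α := α) ι)
      (Finsupp.mapRange.linearMap (α := α) π) := by
  classical
  intro v
  constructor
  · intro hv
    have hv' : ∀ i, π (v i) = 0 := fun i => by
      have := DFunLike.congr_fun hv i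
      simpa using this
    choose w hw using fun i => (hex (v i)).mp (hv' i)
    refine ⟨Finsupp.onFinset v.support w ?_, ?_⟩
    · intro i hi
      rw [Finsupp.mem_support_iff]
      intro h0
      apply hi
      apply hinj
      rw [hw, h0, map_zero]
    · ext i
      simp [Finsupp.onFinset_apply, hw]
  · rintro ⟨u, rfl⟩
    ext i
    simp only [Finsupp.mapRange.linearMap, LinearMap.coe_mk, AddHom.coe_mk,
      Finsupp.mapRange_apply, Finsupp.coe_zero, Pi.zero_apply]
    exact (hex _).mpr ⟨u i, rfl⟩

lemma projDimLE_one_finsupp (α : Type) {N : ModuleCat.{0} A}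
    (hN : ProjDimLE A 1 N) :
    ProjDimLE A 1 (ModuleCat.of A (α →₀ ↥N)) := by
  obtain ⟨K₀, ⟨P, hP, ι, π, hι, hπ, hex⟩, hK₀pd⟩ := projDimLE_succ_iff.mp hN
  haveI := hP
  haveI hK₀ : Module.Projective A ↥K₀ := projective_of_projDimLE_zero hK₀pd
  haveI h1 : Module.Projective A (α →₀ ↥P) := projective_finsupp α ↥P
  haveI h2 : Module.Projective A (α →₀ ↥K₀) := projective_finsupp α ↥K₀
  refine projDimLE_succ_iff.mpr ⟨ModuleCat.of A (α →₀ ↥K₀),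
    ⟨ModuleCat.of A (α →₀ ↥P), h1, Finsupp.mapRange.linearMap ι,
      Finsupp.mapRange.linearMap π, ?_, ?_, exact_mapRange ι π hι hex⟩,
    projDimLE_zero_of_projective h2⟩
  · intro a b hab
    have hab' : Finsupp.mapRange.linearMap (α := α) ι a = Finsupp.mapRange.linearMap ι b := hab
    exact Finsupp.ext fun i => hι
      (by simpa using DFunLike.congr_fun hab' i)
  · intro v
    obtain ⟨u, hu⟩ := Finsupp.mapRange_surjective (⇑π) (map_zero π) hπ v
    exact ⟨u, Finsupp.ext fun i =>
      by simpa using DFunLike.congr_fun hu i⟩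

end Finsupp

section Retract

variable {A : Type} [Ring A]

lemma projDimLE_one_of_retract {X M : ModuleCat.{0} A}
    (i : ↥M →ₗ[A] ↥X) (r : ↥X →ₗ[A] ↥M) (hri : r ∘ₗ i = LinearMap.id)
    (hX : ProjDimLE A 1 X) : ProjDimLE A 1 M := by
  classical
  have hrsurj : Function.Surjective r := fun m => ⟨i m, LinearMap.congr_fun hri m⟩
  have hexr : Function.Exact (LinearMap.ker r).subtype r := fun y =>
    ⟨fun hy => ⟨⟨y, hy⟩, rfl⟩, by rintro ⟨⟨x, hx⟩, rfl⟩; exact hx⟩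
  let eX := (hexr.splitSurjectiveEquiv Subtype.val_injective ⟨i, hri⟩).1
  let Y : ModuleCat.{0} A := ModuleCat.of A (↥(LinearMap.ker r) × ↥M)
  have hY : ProjDimLE A 1 Y := projDimLE_congr eX hX
  set F : Type := ↥M →₀ A with hF
  set F' : Type := ↥(LinearMap.ker r) →₀ A with hF'
  let πM : F →ₗ[A] ↥M := Finsupp.linearCombination A id
  let πM' : F' →ₗ[A] ↥(LinearMap.ker r) := Finsupp.linearCombination A id
  have hπM : Function.Surjective πM := Finsupp.linearCombination_id_surjective A ↥M
  have hπM' : Function.Surjective πM' := Finsupp.linearCombination_id_surjective A _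
  let Φ : F' × F →ₗ[A] ↥Y := πM'.prodMap πM
  have hΦ : Function.Surjective Φ := Function.Surjective.prodMap hπM' hπM
  obtain ⟨K₀, ⟨P, hP, ιK, p, hιK, hpsurj, hexP⟩, hK₀pd⟩ := projDimLE_succ_iff.mp hY
  haveI := hP
  haveI hK₀ : Module.Projective A ↥K₀ := projective_of_projDimLE_zero hK₀pd
  set d : ↥P × (F' × F) →ₗ[A] ↥Y :=
    (p.comp (LinearMap.fst A ↥P (F' × F))) - (Φ.comp (LinearMap.snd A ↥P (F' × F))) with hd
  set Z : Submodule A (↥P × (F' × F)) := LinearMap.ker d with hZ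
  have hmem : ∀ x : ↥P × (F' × F), x ∈ Z ↔ p x.1 = Φ x.2 := fun x => by
    simp [hZ, hd, LinearMap.mem_ker, sub_eq_zero]
  let pr₁ : ↥Z →ₗ[A] ↥P := (LinearMap.fst A _ _).comp Z.subtype
  let pr₂ : ↥Z →ₗ[A] (F' × F) := (LinearMap.snd A _ _).comp Z.subtype
  have hpr₂surj : Function.Surjective pr₂ := fun v => by
    obtain ⟨x, hx⟩ := hpsurj (Φ v)
    exact ⟨⟨(x, v), (hmem _).2 hx⟩, rfl⟩
  have hjK0 : ∀ k : ↥K₀, ((ιK k, 0) : ↥P × (F' × F)) ∈ Z := fun k => (hmem _).2 (by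
    rw [map_zero]
    exact (hexP (ιK k)).mpr ⟨k, rfl⟩)
  let jK : ↥K₀ →ₗ[A] ↥Z := LinearMap.codRestrict Z ((LinearMap.inl A _ _).comp ιK) hjK0
  have hjKinj : Function.Injective jK := fun a b hab => hιK (by
    have := congrArg (fun z : ↥Z => (z : ↥P × (F' × F)).1) hab
    exact this)
  have hjKex : Function.Exact jK pr₂ := by
    intro x
    constructor
    · intro hx
      have h1 : (x : ↥P × (F' × F)).2 = 0 := hx
      have h2 : p (x : ↥P × (F' × F)).1 = 0 := by rw [(hmem _).1 x.2, h1, map_zero]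
      obtain ⟨k, hk⟩ := (hexP _).mp h2
      exact ⟨k, Subtype.ext (Prod.ext (by exact hk) (by exact h1.symm))⟩
    · rintro ⟨k, rfl⟩
      rfl
  haveI hFF' : Module.Projective A (F' × F) := inferInstance
  obtain ⟨h₁, hh₁⟩ := Module.projective_lifting_property p Φ hpsurj
  let s₁ : (F' × F) →ₗ[A] ↥Z := LinearMap.codRestrict Z (h₁.prod LinearMap.id)
    (fun v => (hmem _).2 (by rw [← hh₁]; rfl))
  have hs₁ : pr₂ ∘ₗ s₁ = LinearMap.id := LinearMap.ext fun v => rfl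
  let e₁ := (Function.Exact.splitSurjectiveEquiv (R := A) (M := ↥K₀) (N := ↥Z) (P := F' × F)
    (f := jK) (g := pr₂) hjKex hjKinj ⟨s₁, hs₁⟩).1
  haveI hZproj : Module.Projective A ↥Z :=
    Module.Projective.of_equiv (M := ↥K₀ × (F' × F)) e₁.symm
  set Ω : Submodule A (F' × F) := LinearMap.ker Φ with hΩ
  have hpr₁surj : Function.Surjective pr₁ := fun x => by
    obtain ⟨v, hv⟩ := hΦ (p x)
    exact ⟨⟨(x, v), (hmem _).2 hv.symm⟩, rfl⟩
  have hjΩ0 : ∀ w : ↥Ω, ((0, (w : F' × F)) : ↥P × (F' × F)) ∈ Z := fun w => (hmem _).2 (by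
    rw [map_zero]
    exact (LinearMap.mem_ker.mp w.2).symm)
  let jΩ : ↥Ω →ₗ[A] ↥Z := LinearMap.codRestrict Z ((LinearMap.inr A _ _).comp Ω.subtype) hjΩ0
  have hjΩinj : Function.Injective jΩ := fun a b hab => Subtype.ext (by
    have := congrArg (fun z : ↥Z => (z : ↥P × (F' × F)).2) hab
    exact this)
  have hjΩex : Function.Exact jΩ pr₁ := by
    intro x
    constructor
    · intro hx
      have h1 : (x : ↥P × (F' × F)).1 = 0 := hx
      have h2 : Φ (x : ↥P × (F' × F)).2 = 0 := by rw [← (hmem _).1 x.2, h1, map_zero]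
      exact ⟨⟨_, h2⟩, Subtype.ext (Prod.ext (by exact h1.symm) rfl)⟩
    · rintro ⟨w, rfl⟩
      rfl
  obtain ⟨h₂, hh₂⟩ := Module.projective_lifting_property Φ p hΦ
  let s₂ : ↥P →ₗ[A] ↥Z := LinearMap.codRestrict Z (LinearMap.prod LinearMap.id h₂)
    (fun x => (hmem _).2 (by rw [← hh₂]; rfl))
  have hs₂ : pr₁ ∘ₗ s₂ = LinearMap.id := LinearMap.ext fun x => rfl
  let e₂ := (Function.Exact.splitSurjectiveEquiv (R := A) (M := ↥Ω) (N := ↥Z) (P := ↥P)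
    (f := jΩ) (g := pr₁) hjΩex hjΩinj ⟨s₂, hs₂⟩).1
  haveI hΩproj : Module.Projective A ↥Ω := Module.Projective.of_split
    (M := ↥Z) ((e₂.symm : ↥Ω × ↥P →ₗ[A] ↥Z).comp (LinearMap.inl A ↥Ω ↥P))
    ((LinearMap.fst A ↥Ω ↥P).comp (e₂ : ↥Z →ₗ[A] ↥Ω × ↥P))
    (LinearMap.ext fun w => by
      show (LinearMap.fst A ↥Ω ↥P) (e₂ (e₂.symm (w, 0))) = w
      rw [LinearEquiv.apply_symm_apply]
      rfl)
  set ΩM : Submodule A F := LinearMap.ker πM with hΩM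
  have hjmem : ∀ w : ↥ΩM, ((0, (w : F)) : F' × F) ∈ Ω := fun w => by
    rw [hΩ, LinearMap.mem_ker]
    have h2 : Φ ((0, (w : F)) : F' × F) = (πM' 0, πM (w : F)) := rfl
    rw [h2, map_zero, LinearMap.mem_ker.mp w.2]
    rfl
  let jm : ↥ΩM →ₗ[A] ↥Ω :=
    LinearMap.codRestrict Ω ((LinearMap.inr A F' F).comp ΩM.subtype) hjmem
  have hρmem : ∀ w : ↥Ω, ((w : F' × F)).2 ∈ ΩM := fun w => by
    rw [hΩM, LinearMap.mem_ker]
    have h2 : πM ((w : F' × F).2) = (Φ (w : F' × F)).2 := rfl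
    rw [h2, LinearMap.mem_ker.mp w.2]
    rfl
  let ρ : ↥Ω →ₗ[A] ↥ΩM :=
    LinearMap.codRestrict ΩM ((LinearMap.snd A F' F).comp Ω.subtype) hρmem
  haveI hΩMproj : Module.Projective A ↥ΩM := Module.Projective.of_split jm ρ
    (LinearMap.ext fun w => rfl)
  haveI hFproj : Module.Projective A F := inferInstance
  refine projDimLE_succ_iff.mpr ⟨ModuleCat.of A ↥ΩM, ?_,
    projDimLE_zero_of_projective hΩMproj⟩
  refine ⟨ModuleCat.of A F, hFproj, ΩM.subtype, πM, Subtype.val_injective, hπM, fun y => ?_⟩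
  constructor
  · intro hy
    exact ⟨⟨y, hy⟩, rfl⟩
  · rintro ⟨⟨x, hx⟩, rfl⟩
    exact hx

end Retract

section Res

variable {A B : Type} [Ring A] [Ring B] (g : A →+* B)

abbrev resM (M : ModuleCat.{0} B) : ModuleCat.{0} A := (ModuleCat.restrictScalars g).obj M

def resMap {M N : ModuleCat.{0} B} (φ : ↥M →ₗ[B] ↥N) :
    ↥(resM g M) →ₗ[A] ↥(resM g N) where
  toFun := φ
  map_add' := φ.map_add
  map_smul' a m := φ.map_smul (g a) m

def resFinsuppEquiv (α : Type) :
    ↥(resM g (ModuleCat.of B (α →₀ B))) ≃ₗ[A] (α →₀ ↥(resM g (ModuleCat.of B B))) where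
  toFun v := v
  invFun v := v
  left_inv _ := rfl
  right_inv _ := rfl
  map_add' _ _ := rfl
  map_smul' a v := Finsupp.ext fun i => rfl

lemma resProj {P : ModuleCat.{0} B} (hB1 : ProjDimLE A 1 (resM g (ModuleCat.of B B)))
    (hP : Module.Projective B ↥P) : ProjDimLE A 1 (resM g P) := by
  obtain ⟨s, hs⟩ := hP.out
  have h1 : ProjDimLE A 1 (ModuleCat.of A (↥P →₀ ↥(resM g (ModuleCat.of B B)))) :=
    projDimLE_one_finsupp ↥P hB1
  have h2 : ProjDimLE A 1 (resM g (ModuleCat.of B (↥P →₀ B))) :=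
    projDimLE_congr (resFinsuppEquiv g ↥P).symm h1
  exact projDimLE_one_of_retract (X := resM g (ModuleCat.of B (↥P →₀ B))) (M := resM g P)
    (resMap (M := P) (N := ModuleCat.of B (↥P →₀ B)) g s)
    (resMap (M := ModuleCat.of B (↥P →₀ B)) (N := P) g (Finsupp.linearCombination B id))
    (LinearMap.ext fun x => hs x) h2

lemma resKey (hB1 : ProjDimLE A 1 (resM g (ModuleCat.of B B))) :
    ∀ (n : ℕ) (M : ModuleCat.{0} B), ProjDimLE B n M → ProjDimLE A (n + 1) (resM g M) := by
  intro n
  induction n with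
  | zero =>
    intro M hM
    exact resProj g hB1 (projective_of_projDimLE_zero hM)
  | succ n ih =>
    intro M hM
    obtain ⟨K, ⟨P, hP, ι, π, hι, hπ, hex⟩, hK⟩ := projDimLE_succ_iff.mp hM
    exact projDimLE_step (n + 1) (resMap g ι) (resMap g π) hι hπ hex
      (resProj g hB1 hP) (ih K hK)

end Res

section Quot

variable {A : Type} [Ring A]

lemma mem_span_iff_idemIdeal (f x : A) :
    x ∈ TwoSidedIdeal.span {f} ↔ x ∈ idemIdeal A f := by
  constructor
  · intro hx
    have hright : ∀ y : A, y ∈ idemIdeal A f → ∀ b, y * b ∈ idemIdeal A f := by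
      intro y hy
      refine Submodule.span_induction (p := fun y _ => ∀ b, y * b ∈ idemIdeal A f)
        ?_ ?_ ?_ ?_ hy
      · rintro y ⟨c, rfl⟩ b
        exact Submodule.subset_span ⟨c * b, by rw [mul_assoc]⟩
      · intro b
        rw [zero_mul]
        exact (idemIdeal A f).zero_mem
      · intro u v hu hv hub hvb b
        rw [add_mul]
        exact (idemIdeal A f).add_mem (hub b) (hvb b)
      · intro a u hu hub b
        have : (a • u) * b = a • (u * b) := by rw [smul_eq_mul, smul_eq_mul, mul_assoc]
        rw [this]
        exact (idemIdeal A f).smul_mem a (hub b)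
    let J : TwoSidedIdeal A := TwoSidedIdeal.mk' (idemIdeal A f : Set A)
      (idemIdeal A f).zero_mem
      (fun hx hy => (idemIdeal A f).add_mem hx hy)
      (fun hx => (idemIdeal A f).neg_mem hx)
      (fun {x y} hy => (idemIdeal A f).smul_mem x hy)
      (fun {x y} hx => hright x hx y)
    have hfJ : ({f} : Set A) ⊆ ↑J := by
      intro z hz
      rw [Set.mem_singleton_iff] at hz
      rw [SetLike.mem_coe, TwoSidedIdeal.mem_mk', hz]
      exact Submodule.subset_span ⟨1, mul_one f⟩
    have := TwoSidedIdeal.mem_span_iff.mp hx J hfJ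
    rwa [TwoSidedIdeal.mem_mk'] at this
  · intro hx
    refine Submodule.span_induction (p := fun y _ => y ∈ TwoSidedIdeal.span {f})
      ?_ ?_ ?_ ?_ hx
    · rintro y ⟨c, rfl⟩
      refine TwoSidedIdeal.mul_mem_right _ _ _ ?_
      exact TwoSidedIdeal.subset_span rfl
    · exact TwoSidedIdeal.zero_mem _
    · intro u v _ _ hu hv
      exact TwoSidedIdeal.add_mem _ hu hv
    · intro a u _ hu
      exact TwoSidedIdeal.mul_mem_left _ a u hu

lemma hB_of_hpd (f : A)
    (hpd : ProjDimLE A 1 (quotMod A f)) :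
    ProjDimLE A 1 (resM (RingCon.mk' (TwoSidedIdeal.span {f}).ringCon)
      (ModuleCat.of (TwoSidedIdeal.span {f}).ringCon.Quotient
        (TwoSidedIdeal.span {f}).ringCon.Quotient)) := by
  set c := (TwoSidedIdeal.span {f}).ringCon with hc
  set g : A →+* c.Quotient := RingCon.mk' c with hg
  let tgt := resM g (ModuleCat.of c.Quotient c.Quotient)
  let φ : A →ₗ[A] ↥tgt :=
    { toFun := fun a => g a
      map_add' := fun x y => map_add g x y
      map_smul' := fun a x => map_mul g a x }
  have hφsurj : Function.Surjective φ := fun b => Quotient.inductionOn' b fun a => ⟨a, rfl⟩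
  have hker : LinearMap.ker φ = idemIdeal A f := by
    ext x
    rw [LinearMap.mem_ker]
    have h1 : φ x = 0 ↔ c x 0 := by
      change (g x = 0) ↔ _
      rw [← map_zero g]
      exact RingCon.eq c
    rw [h1, TwoSidedIdeal.rel_iff _ _ _, sub_zero]
    exact mem_span_iff_idemIdeal f x
  let e1 : (A ⧸ idemIdeal A f) ≃ₗ[A] (A ⧸ LinearMap.ker φ) :=
    Submodule.quotEquivOfEq _ _ hker.symm
  let e2 : (A ⧸ LinearMap.ker φ) ≃ₗ[A] ↥tgt := φ.quotKerEquivOfSurjective hφsurj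
  exact projDimLE_congr (e1.trans e2) hpd

end Quot


/-- If `projdim_A(A/⟨f⟩) ≤ 1` and `A/⟨f⟩` has finite global dimension,
then every finitely generated `A/⟨f⟩`-module has finite projective dimension over `A`. -/
theorem stmt_5 (k A : Type) [Field k] [Ring A] [Algebra k A] [FiniteDimensional k A]
    (f : A) (hf : IsIdempotentElem f)
    (hpd : ProjDimLE A 1 (quotMod A f))
    (hgl : ∃ n : ℕ, ∀ M : ModuleCat.{0} ((TwoSidedIdeal.span {f}).ringCon.Quotient),
      Module.Finite ((TwoSidedIdeal.span {f}).ringCon.Quotient) M →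
      ProjDimLE ((TwoSidedIdeal.span {f}).ringCon.Quotient) n M) :
    ∀ M : ModuleCat.{0} ((TwoSidedIdeal.span {f}).ringCon.Quotient),
      Module.Finite ((TwoSidedIdeal.span {f}).ringCon.Quotient) M →
      ∃ n : ℕ, ProjDimLE A n
        ((ModuleCat.restrictScalars (RingCon.mk' (TwoSidedIdeal.span {f}).ringCon)).obj M) := by
  obtain ⟨n, hn⟩ := hgl
  intro M hM
  exact ⟨n + 1, resKey (RingCon.mk' (TwoSidedIdeal.span {f}).ringCon)
    (hB_of_hpd f hpd) n M (hn M hM)⟩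

end
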